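/- arXiv:2003.01086 — 2 statements merged into one kernel-verified Lean document; each statement's English description precedes it below -/
import Mathlib

section
/- Let X, Y, A, B be nonempty finite types, let p be a strictly positive probability mass function on X × Y, and let e : X → A and f : Y → B. Then the infimum, over all restricted prediction models q_ψ, of the predictive loss ℓ(q_ψ) = Σ_x p_X(x) · KL(p(·|x) ‖ q_ψ(·|x)) is at most the mutual information gap I(X;Y) − I(e(X); f(Y)). In particular, there exists a restricted prediction model whose predictive loss equals I(X;Y) − I(e(X); f(Y)). -/
/-!
Statement 0: For a strictly positive pmf `p` on `X × Y` and maps `e : X → A`,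
`f : Y → B`, the infimum over restricted prediction models
`q_ψ(y|x) ∝ ψ1(y)·ψ2(e x, f y)` of the predictive loss
`∑_x p_X(x) · KL(p(·|x) ‖ q_ψ(·|x))` is at most the mutual information gap
`I(X;Y) − I(e(X); f(Y))`, and some restricted model attains exactly the gap.
-/

open Finset
open scoped Classical

noncomputable section

variable {X Y A B : Type*} [Fintype X] [Fintype Y] [Fintype A] [Fintype B]

/-- Marginal of the first coordinate. -/
def margX (p : X × Y → ℝ) (x : X) : ℝ := ∑ y, p (x, y)

/-- Marginal of the second coordinate. -/
def margY (p : X × Y → ℝ) (y : Y) : ℝ := ∑ x, p (x, y)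

/-- Conditional pmf of `y` given `x`. -/
def condYX (p : X × Y → ℝ) (y : Y) (x : X) : ℝ := p (x, y) / margX p x

/-- Mutual information between the two coordinates of a pmf on a product of
finite types (terms with zero mass contribute `0`, since `Real.log 0 = 0`). -/
def mutualInfo (p : X × Y → ℝ) : ℝ :=
  ∑ x, ∑ y, p (x, y) * Real.log (p (x, y) / (margX p x * margY p y))

/-- Pushforward pmf of `p` under `(x, y) ↦ (e x, f y)`. -/
def pushPmf (p : X × Y → ℝ) (e : X → A) (f : Y → B) : A × B → ℝ :=
  fun ab => ∑ x, ∑ y, if e x = ab.1 ∧ f y = ab.2 then p (x, y) else 0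

/-- KL divergence between two pmfs on a finite type. -/
def klPmf (f g : Y → ℝ) : ℝ := ∑ y, f y * Real.log (f y / g y)

/-- The restricted prediction model `q_ψ(y|x)` induced by `ψ1, ψ2`. -/
def qModel (e : X → A) (f : Y → B) (ψ1 : Y → ℝ) (ψ2 : A × B → ℝ) (y : Y) (x : X) : ℝ :=
  ψ1 y * ψ2 (e x, f y) / ∑ y', ψ1 y' * ψ2 (e x, f y')

/-- Predictive loss of a conditional model `q y x = q(y|x)` under `p`. -/
def predLoss (p : X × Y → ℝ) (q : Y → X → ℝ) : ℝ :=
  ∑ x, margX p x * klPmf (fun y => condYX p y x) (fun y => q y x)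

lemma sum_push (p : X × Y → ℝ) (e : X → A) (f : Y → B) (g : A × B → ℝ) :
    ∑ a, ∑ b, pushPmf p e f (a, b) * g (a, b) = ∑ x, ∑ y, p (x, y) * g (e x, f y) := by
  simp only [pushPmf, Finset.sum_mul, ite_mul, zero_mul]
  conv_lhs => enter [2, a]; rw [Finset.sum_comm]
  rw [Finset.sum_comm]
  apply Finset.sum_congr rfl; intro x _
  conv_lhs => enter [2, a]; rw [Finset.sum_comm]
  rw [Finset.sum_comm]
  apply Finset.sum_congr rfl; intro y _
  simp [ite_and, Finset.sum_ite_eq]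

lemma margY_push (p : X × Y → ℝ) (e : X → A) (f : Y → B) (b : B) :
    margY (pushPmf p e f) b = ∑ y, if f y = b then margY p y else 0 := by
  simp only [margY, pushPmf]
  conv_lhs => rw [Finset.sum_comm]
  conv_lhs => enter [2, x]; rw [Finset.sum_comm]
  simp only [ite_and, Finset.sum_ite_eq, Finset.mem_univ, if_true]
  rw [Finset.sum_comm]
  apply Finset.sum_congr rfl; intro y _
  split_ifs <;> simp

lemma ite_nn {c : Prop} [Decidable c] {a : ℝ} (h : 0 ≤ a) : 0 ≤ if c then a else 0 := by
  split_ifs <;> simp [h]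

lemma group_fiber (f : Y → B) (F : B → ℝ) (G : Y → ℝ) :
    ∑ y, F (f y) * G y = ∑ b, F b * ∑ y, if f y = b then G y else 0 := by
  simp only [Finset.mul_sum, mul_ite, mul_zero]
  rw [Finset.sum_comm]
  apply Finset.sum_congr rfl; intro y _
  simp [Finset.sum_ite_eq]

theorem predictive_suboptimality_le_mutual_information_gap
    [Nonempty X] [Nonempty Y] [Nonempty A] [Nonempty B]
    (p : X × Y → ℝ) (hpos : ∀ xy, 0 < p xy) (hsum : ∑ xy, p xy = 1)
    (e : X → A) (f : Y → B) :
    sInf {ℓ : ℝ | ∃ ψ1 : Y → ℝ, ∃ ψ2 : A × B → ℝ,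
        (∀ y, 0 ≤ ψ1 y) ∧ (∀ ab, 0 ≤ ψ2 ab) ∧
        (∀ x, 0 < ∑ y', ψ1 y' * ψ2 (e x, f y')) ∧
        ℓ = predLoss p (qModel e f ψ1 ψ2)}
      ≤ mutualInfo p - mutualInfo (pushPmf p e f) ∧
    ∃ ψ1 : Y → ℝ, ∃ ψ2 : A × B → ℝ,
        (∀ y, 0 ≤ ψ1 y) ∧ (∀ ab, 0 ≤ ψ2 ab) ∧
        (∀ x, 0 < ∑ y', ψ1 y' * ψ2 (e x, f y')) ∧
        predLoss p (qModel e f ψ1 ψ2) = mutualInfo p - mutualInfo (pushPmf p e f) := by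

  set P : A × B → ℝ := pushPmf p e f with hP
  -- basic positivity facts
  have hX : ∀ x, 0 < margX p x := fun x =>
    Finset.sum_pos (fun y _ => hpos (x, y)) Finset.univ_nonempty
  have hY : ∀ y, 0 < margY p y := fun y =>
    Finset.sum_pos (fun x _ => hpos (x, y)) Finset.univ_nonempty
  have hPnn : ∀ ab, 0 ≤ P ab := by
    intro ab
    exact Finset.sum_nonneg fun x _ => Finset.sum_nonneg fun y _ => ite_nn (hpos _).le
  have hPef : ∀ x y, p (x, y) ≤ P (e x, f y) := by
    intro x y
    have h1 : p (x, y) ≤ ∑ y', if e x = e x ∧ f y' = f y then p (x, y') else 0 := by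
      have := Finset.single_le_sum (f := fun y' => if e x = e x ∧ f y' = f y then p (x, y') else 0)
        (fun y' _ => ite_nn (hpos _).le) (Finset.mem_univ y)
      simpa using this
    refine h1.trans ?_
    exact Finset.single_le_sum (f := fun x' => ∑ y', if e x' = e x ∧ f y' = f y then p (x', y') else 0)
      (fun x' _ => Finset.sum_nonneg fun y' _ => ite_nn (hpos _).le)
      (Finset.mem_univ x)
  have hPefpos : ∀ x y, 0 < P (e x, f y) := fun x y => lt_of_lt_of_le (hpos (x, y)) (hPef x y)
  have hmBnn : ∀ b, 0 ≤ margY P b := fun b => Finset.sum_nonneg fun a _ => hPnn (a, b)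
  have hmAnn : ∀ a, 0 ≤ margX P a := fun a => Finset.sum_nonneg fun b _ => hPnn (a, b)
  have hPle_mA : ∀ a b, P (a, b) ≤ margX P a := fun a b =>
    Finset.single_le_sum (f := fun b' => P (a, b')) (fun b' _ => hPnn (a, b')) (Finset.mem_univ b)
  have hPle_mB : ∀ a b, P (a, b) ≤ margY P b := fun a b =>
    Finset.single_le_sum (f := fun a' => P (a', b)) (fun a' _ => hPnn (a', b)) (Finset.mem_univ a)
  have hmA : ∀ x, 0 < margX P (e x) := by
    intro x
    obtain ⟨y⟩ := ‹Nonempty Y›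
    exact lt_of_lt_of_le (hPefpos x y) (hPle_mA (e x) (f y))
  have hmB : ∀ y, 0 < margY P (f y) := by
    intro y
    obtain ⟨x⟩ := ‹Nonempty X›
    exact lt_of_lt_of_le (hPefpos x y) (hPle_mB (e x) (f y))
  -- the optimal restricted model
  set ψ1 : Y → ℝ := fun y => margY p y with hψ1
  set ψ2 : A × B → ℝ := fun ab => P ab / (margX P ab.1 * margY P ab.2) with hψ2
  have hψ1nn : ∀ y, 0 ≤ ψ1 y := fun y => (hY y).le
  have hψ2nn : ∀ ab, 0 ≤ ψ2 ab := fun ab =>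
    div_nonneg (hPnn ab) (mul_nonneg (hmAnn ab.1) (hmBnn ab.2))
  have hψ2pos : ∀ x y, 0 < ψ2 (e x, f y) := fun x y =>
    div_pos (hPefpos x y) (mul_pos (hmA x) (hmB y))
  -- normalization constant equals 1
  have hZ : ∀ x, ∑ y', ψ1 y' * ψ2 (e x, f y') = 1 := by
    intro x
    have h1 : ∀ y', ψ1 y' * ψ2 (e x, f y')
        = (fun b => P (e x, b) / (margX P (e x) * margY P b)) (f y') * margY p y' := by
      intro y'; simp [hψ1, hψ2, mul_comm]
    calc ∑ y', ψ1 y' * ψ2 (e x, f y')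
        = ∑ y', (fun b => P (e x, b) / (margX P (e x) * margY P b)) (f y') * margY p y' := by
          exact Finset.sum_congr rfl fun y' _ => h1 y'
      _ = ∑ b, (P (e x, b) / (margX P (e x) * margY P b)) * ∑ y', if f y' = b then margY p y' else 0 := by
          exact group_fiber f (fun b => P (e x, b) / (margX P (e x) * margY P b))
            (fun y' => margY p y')
      _ = ∑ b, (P (e x, b) / (margX P (e x) * margY P b)) * margY P b := by
          exact Finset.sum_congr rfl fun b _ => by rw [← margY_push p e f b]
      _ = ∑ b, P (e x, b) / margX P (e x) := by
          refine Finset.sum_congr rfl fun b _ => ?_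
          rcases eq_or_lt_of_le (hmBnn b) with h | h
          · have hP0 : P (e x, b) = 0 :=
              le_antisymm ((hPle_mB (e x) b).trans h.ge) (hPnn _)
            simp [hP0]
          · rw [div_mul_eq_mul_div, mul_comm (margX P (e x)) (margY P b), ← div_div,
              mul_div_assoc, div_self h.ne', mul_one]
      _ = (∑ b, P (e x, b)) / margX P (e x) := by rw [Finset.sum_div]
      _ = 1 := by
          rw [show (∑ b, P (e x, b)) = margX P (e x) from rfl]
          exact div_self (hmA x).ne'
  -- value of the predictive loss of the optimal model
  have hval : predLoss p (qModel e f ψ1 ψ2) = mutualInfo p - mutualInfo P := by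
    have hterm : ∀ x y, margX p x * (condYX p y x * Real.log (condYX p y x / qModel e f ψ1 ψ2 y x))
        = p (x, y) * Real.log (p (x, y) / (margX p x * margY p y))
          - p (x, y) * Real.log (P (e x, f y) / (margX P (e x) * margY P (f y))) := by
      intro x y
      have hq : qModel e f ψ1 ψ2 y x = margY p y * (P (e x, f y) / (margX P (e x) * margY P (f y))) := by
        rw [qModel, hZ x, div_one]
      have hcond : condYX p y x = p (x, y) / margX p x := rfl
      have hmXne : margX p x ≠ 0 := (hX x).ne'
      have hmYne : margY p y ≠ 0 := (hY y).ne'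
      have hPne : P (e x, f y) ≠ 0 := (hPefpos x y).ne'
      have hmAne : margX P (e x) ≠ 0 := (hmA x).ne'
      have hmBne : margY P (f y) ≠ 0 := (hmB y).ne'
      have harg : condYX p y x / qModel e f ψ1 ψ2 y x
          = (p (x, y) / (margX p x * margY p y)) / (P (e x, f y) / (margX P (e x) * margY P (f y))) := by
        rw [hq, hcond]; field_simp
      have hnum : p (x, y) / (margX p x * margY p y) ≠ 0 :=
        ne_of_gt (div_pos (hpos _) (mul_pos (hX x) (hY y)))
      have hden2 : P (e x, f y) / (margX P (e x) * margY P (f y)) ≠ 0 :=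
        ne_of_gt (div_pos (hPefpos x y) (mul_pos (hmA x) (hmB y)))
      rw [harg, Real.log_div hnum hden2, hcond]
      have haux : ∀ L : ℝ, margX p x * (p (x, y) / margX p x * L) = p (x, y) * L := by
        intro L; field_simp
      rw [haux, mul_sub]
    unfold predLoss klPmf
    simp only [Finset.mul_sum]
    calc ∑ x, ∑ y, margX p x * (condYX p y x * Real.log (condYX p y x / qModel e f ψ1 ψ2 y x))
        = ∑ x, ∑ y, (p (x, y) * Real.log (p (x, y) / (margX p x * margY p y))
          - p (x, y) * Real.log (P (e x, f y) / (margX P (e x) * margY P (f y)))) := by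
          exact Finset.sum_congr rfl fun x _ => Finset.sum_congr rfl fun y _ => hterm x y
      _ = mutualInfo p - ∑ x, ∑ y, p (x, y) *
            (fun ab => Real.log (P ab / (margX P ab.1 * margY P ab.2))) (e x, f y) := by
          simp only [Finset.sum_sub_distrib, mutualInfo]
      _ = mutualInfo p - mutualInfo P := by
          rw [← sum_push p e f (fun ab => Real.log (P ab / (margX P ab.1 * margY P ab.2)))]
          rfl
  refine ⟨?_, ψ1, ψ2, hψ1nn, hψ2nn, fun x => by rw [hZ x]; norm_num, hval⟩
  -- the infimum bound
  have hmem : mutualInfo p - mutualInfo P ∈ {ℓ : ℝ | ∃ ψ1' : Y → ℝ, ∃ ψ2' : A × B → ℝ,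
      (∀ y, 0 ≤ ψ1' y) ∧ (∀ ab, 0 ≤ ψ2' ab) ∧
      (∀ x, 0 < ∑ y', ψ1' y' * ψ2' (e x, f y')) ∧
      ℓ = predLoss p (qModel e f ψ1' ψ2')} :=
    ⟨ψ1, ψ2, hψ1nn, hψ2nn, fun x => by rw [hZ x]; norm_num, hval.symm⟩
  refine csInf_le ⟨∑ x, ∑ y, p (x, y) * Real.log (condYX p y x), ?_⟩ hmem
  rintro ℓ ⟨φ1, φ2, hφ1, hφ2, hden, rfl⟩
  unfold predLoss klPmf
  simp only [Finset.mul_sum]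
  refine Finset.sum_le_sum fun x _ => Finset.sum_le_sum fun y _ => ?_
  have hmX := hX x
  have hcond : condYX p y x = p (x, y) / margX p x := rfl
  have hcpos : 0 < condYX p y x := by rw [hcond]; exact div_pos (hpos _) hmX
  have hcle1 : condYX p y x ≤ 1 := by
    rw [hcond, div_le_one hmX]
    exact Finset.single_le_sum (f := fun y' => p (x, y')) (fun y' _ => (hpos _).le) (Finset.mem_univ y)
  have key : Real.log (condYX p y x) ≤ Real.log (condYX p y x / qModel e f φ1 φ2 y x) := by
    set q := qModel e f φ1 φ2 y x with hqdef
    have hqnn : 0 ≤ q := div_nonneg (mul_nonneg (hφ1 y) (hφ2 _)) (hden x).le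
    rcases eq_or_lt_of_le hqnn with h0 | hq
    · rw [← h0, div_zero, Real.log_zero]
      exact Real.log_nonpos hcpos.le hcle1
    · have hqle1 : q ≤ 1 := by
        rw [hqdef, qModel, div_le_one (hden x)]
        exact Finset.single_le_sum (f := fun y' => φ1 y' * φ2 (e x, f y'))
          (fun y' _ => mul_nonneg (hφ1 y') (hφ2 _)) (Finset.mem_univ y)
      apply Real.log_le_log hcpos
      calc condYX p y x = condYX p y x / 1 := (div_one _).symm
        _ ≤ condYX p y x / q := by
            exact div_le_div_of_nonneg_left hcpos.le hq hqle1
  calc p (x, y) * Real.log (condYX p y x)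
      = margX p x * (condYX p y x * Real.log (condYX p y x)) := by
        rw [hcond]; field_simp
    _ ≤ margX p x * (condYX p y x * Real.log (condYX p y x / qModel e f φ1 φ2 y x)) := by
        apply mul_le_mul_of_nonneg_left _ hmX.le
        exact mul_le_mul_of_nonneg_left key hcpos.le

end
end

section
/- Let X, U, Z be measurable spaces, and let P be a Markov kernel from X × U to X, Enc a Markov kernel from X to Z, and F a Markov kernel from Z × U to Z. Fix x ∈ X and u₀, u₁ ∈ U. Define the probability measures on Z: μ₂ = (P(x,u₀)).bind( x₁ ↦ (P(x₁,u₁)).bind( x₂ ↦ Enc(x₂) ) ) (encode after two steps of the true dynamics) and ν₂ = ((Enc(x)).bind( z₀ ↦ F(z₀,u₀) )).bind( z₁ ↦ F(z₁,u₁) ) (two steps of the latent dynamics after encoding). Then, assuming the map x₁ ↦ tv( (P(x₁,u₁)).bind(Enc), (Enc(x₁)).bind( z ↦ F(z,u₁) ) ) is measurable, tv(μ₂, ν₂) ≤ tv( (P(x,u₀)).bind(Enc), (Enc(x)).bind( z ↦ F(z,u₀) ) ) + ∫ tv( (P(x₁,u₁)).bind(Enc), (Enc(x₁)).bind( z ↦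 F(z,u₁) ) ) d(P(x,u₀))(x₁). -/
/-!
Statement 10: two-step total-variation consistency bound. With Markov kernels
`P : X × U → X` (true dynamics), `Enc : X → Z` (encoder), `F : Z × U → Z`
(latent dynamics), the TV distance between encoding after two true steps and
two latent steps after encoding is bounded by a sum of one-step TV
consistency terms.
-/

open MeasureTheory ProbabilityTheory

/-- Total variation distance between two measures:
`sup` over measurable sets `s` of `|μ s − ν s|`. -/
noncomputable def tv {α : Type*} [MeasurableSpace α] (μ ν : Measure α) : ℝ :=
  ⨆ s : {s : Set α // MeasurableSet s}, |(μ s).toReal - (ν s).toReal|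

section Helpers

variable {α β : Type*} [MeasurableSpace α] [MeasurableSpace β]

lemma my_isProbabilityMeasure_bind (μ : Measure α) [IsProbabilityMeasure μ]
    (κ : Kernel α β) [IsMarkovKernel κ] : IsProbabilityMeasure (μ.bind ⇑κ) := by
  constructor
  rw [Measure.bind_apply MeasurableSet.univ κ.measurable.aemeasurable]
  simp

lemma toReal_prob_le_one (μ : Measure α) [IsProbabilityMeasure μ] (s : Set α) :
    (μ s).toReal ≤ 1 := by
  have h := prob_le_one (μ := μ) (s := s)
  simpa using ENNReal.toReal_mono ENNReal.one_ne_top h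

lemma tv_bddAbove (μ ν : Measure α) [IsProbabilityMeasure μ] [IsProbabilityMeasure ν] :
    BddAbove (Set.range fun s : {s : Set α // MeasurableSet s} =>
      |(μ s).toReal - (ν s).toReal|) := by
  refine ⟨1, ?_⟩
  rintro r ⟨s, rfl⟩
  rw [abs_sub_le_iff]
  constructor <;>
    [skip; skip] <;>
    · have h1 := toReal_prob_le_one μ (s : Set α)
      have h2 := toReal_prob_le_one ν (s : Set α)
      have h3 : 0 ≤ (μ (s : Set α)).toReal := ENNReal.toReal_nonneg
      have h4 : 0 ≤ (ν (s : Set α)).toReal := ENNReal.toReal_nonneg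
      linarith

lemma abs_le_tv (μ ν : Measure α) [IsProbabilityMeasure μ] [IsProbabilityMeasure ν]
    {s : Set α} (hs : MeasurableSet s) :
    |(μ s).toReal - (ν s).toReal| ≤ tv μ ν :=
  le_ciSup (tv_bddAbove μ ν) ⟨s, hs⟩

lemma tv_le (μ ν : Measure α) {c : ℝ}
    (h : ∀ s : Set α, MeasurableSet s → |(μ s).toReal - (ν s).toReal| ≤ c) :
    tv μ ν ≤ c := by
  haveI : Nonempty {s : Set α // MeasurableSet s} := ⟨⟨∅, MeasurableSet.empty⟩⟩
  exact ciSup_le fun s => h s s.2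

lemma tv_nonneg (μ ν : Measure α) [IsProbabilityMeasure μ] [IsProbabilityMeasure ν] :
    0 ≤ tv μ ν := by
  have := abs_le_tv μ ν MeasurableSet.empty
  simpa using le_trans (abs_nonneg _) this

lemma tv_le_one (μ ν : Measure α) [IsProbabilityMeasure μ] [IsProbabilityMeasure ν] :
    tv μ ν ≤ 1 := by
  refine tv_le μ ν fun s hs => ?_
  rw [abs_sub_le_iff]
  have h1 := toReal_prob_le_one μ s
  have h2 := toReal_prob_le_one ν s
  have h3 : 0 ≤ (μ s).toReal := ENNReal.toReal_nonneg
  have h4 : 0 ≤ (ν s).toReal := ENNReal.toReal_nonneg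
  constructor <;> linarith

lemma tv_comm (μ ν : Measure α) : tv μ ν = tv ν μ := by
  unfold tv
  congr 1
  funext s
  rw [abs_sub_comm]

lemma my_integrable_of_bounded {g : α → ℝ} (μ : Measure α) [IsFiniteMeasure μ]
    (hg : Measurable g) (C : ℝ) (hb : ∀ a, |g a| ≤ C) : Integrable g μ :=
  ⟨hg.aestronglyMeasurable, HasFiniteIntegral.of_bounded (C := C) (ae_of_all _ hb)⟩

lemma integral_sub_le_tv (μ ν : Measure α) [IsProbabilityMeasure μ] [IsProbabilityMeasure ν]
    {g : α → ℝ} (hg : Measurable g) (h0 : ∀ a, 0 ≤ g a) (h1 : ∀ a, g a ≤ 1) :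
    ∫ a, g a ∂μ - ∫ a, g a ∂ν ≤ tv μ ν := by
  obtain ⟨d, hd, hd1, hd2⟩ := hahn_decomposition (μ := μ) (ν := ν)
  have hbound : ∀ a, |g a| ≤ 1 := fun a => abs_le.2 ⟨by linarith [h0 a], h1 a⟩
  have hgint : ∀ (ρ : Measure α) [IsFiniteMeasure ρ], Integrable g ρ := fun ρ _ =>
    my_integrable_of_bounded ρ hg 1 hbound
  -- restrict comparisons
  have hlec : μ.restrict dᶜ ≤ ν.restrict dᶜ := by
    refine Measure.le_iff.2 fun t ht => ?_
    rw [Measure.restrict_apply ht, Measure.restrict_apply ht]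
    exact hd2 _ (ht.inter hd.compl) Set.inter_subset_right
  have hled : ν.restrict d ≤ μ.restrict d := by
    refine Measure.le_iff.2 fun t ht => ?_
    rw [Measure.restrict_apply ht, Measure.restrict_apply ht]
    exact hd1 _ (ht.inter hd) Set.inter_subset_right
  have hmu : ∫ a, g a ∂μ = ∫ a in d, g a ∂μ + ∫ a in dᶜ, g a ∂μ :=
    (integral_add_compl hd (hgint μ)).symm
  have hnu : ∫ a, g a ∂ν = ∫ a in d, g a ∂ν + ∫ a in dᶜ, g a ∂ν :=
    (integral_add_compl hd (hgint ν)).symm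
  have hcompl : ∫ a in dᶜ, g a ∂μ ≤ ∫ a in dᶜ, g a ∂ν :=
    integral_mono_measure hlec (ae_of_all _ h0) (Integrable.restrict (hgint ν))
  -- on d : consider 1 - g
  have hone : ∀ a, 0 ≤ 1 - g a := fun a => by linarith [h1 a]
  have hint1 : ∀ (ρ : Measure α) [IsFiniteMeasure ρ], Integrable (fun a => 1 - g a) ρ :=
    fun ρ _ => (integrable_const 1).sub (hgint ρ)
  have hkey : ∫ a in d, (1 - g a) ∂ν ≤ ∫ a in d, (1 - g a) ∂μ :=
    integral_mono_measure hled (ae_of_all _ hone) (Integrable.restrict (hint1 μ))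
  have hconst : ∀ (ρ : Measure α) [IsProbabilityMeasure ρ],
      ∫ a in d, (1 - g a) ∂ρ = (ρ d).toReal - ∫ a in d, g a ∂ρ := by
    intro ρ _
    rw [integral_sub (integrable_const 1) (Integrable.restrict (hgint ρ))]
    simp [Measure.restrict_apply_univ, measureReal_def]
  rw [hconst μ, hconst ν] at hkey
  have hd_le : (μ d).toReal - (ν d).toReal ≤ tv μ ν :=
    le_trans (le_abs_self _) (abs_le_tv μ ν hd)
  linarith
lemma abs_integral_sub_le_tv (μ ν : Measure α) [IsProbabilityMeasure μ] [IsProbabilityMeasure ν]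
    {g : α → ℝ} (hg : Measurable g) (h0 : ∀ a, 0 ≤ g a) (h1 : ∀ a, g a ≤ 1) :
    |∫ a, g a ∂μ - ∫ a, g a ∂ν| ≤ tv μ ν := by
  rw [abs_sub_le_iff]
  refine ⟨integral_sub_le_tv μ ν hg h0 h1, ?_⟩
  rw [tv_comm]
  exact integral_sub_le_tv ν μ hg h0 h1

lemma bind_apply_toReal (μ : Measure α) [IsProbabilityMeasure μ] (κ : Kernel α β)
    [IsMarkovKernel κ] {s : Set β} (hs : MeasurableSet s) :
    ((μ.bind ⇑κ) s).toReal = ∫ a, (κ a s).toReal ∂μ := by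
  rw [Measure.bind_apply hs κ.measurable.aemeasurable,
    integral_toReal (κ.measurable_coe hs).aemeasurable
      (ae_of_all _ fun a => lt_of_le_of_lt prob_le_one ENNReal.one_lt_top)]

lemma tv_bind_le (μ ν : Measure α) [IsProbabilityMeasure μ] [IsProbabilityMeasure ν]
    (κ : Kernel α β) [IsMarkovKernel κ] : tv (μ.bind ⇑κ) (ν.bind ⇑κ) ≤ tv μ ν := by
  refine tv_le _ _ fun s hs => ?_
  rw [bind_apply_toReal μ κ hs, bind_apply_toReal ν κ hs]
  exact abs_integral_sub_le_tv μ ν ((κ.measurable_coe hs).ennreal_toReal)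
    (fun a => ENNReal.toReal_nonneg) (fun a => toReal_prob_le_one (κ a) s)

lemma tv_bind_pair_le (μ : Measure α) [IsProbabilityMeasure μ]
    (κ η : Kernel α β) [IsMarkovKernel κ] [IsMarkovKernel η]
    (hmeas : Measurable fun a => tv (κ a) (η a)) :
    tv (μ.bind ⇑κ) (μ.bind ⇑η) ≤ ∫ a, tv (κ a) (η a) ∂μ := by
  refine tv_le _ _ fun s hs => ?_
  rw [bind_apply_toReal μ κ hs, bind_apply_toReal μ η hs]
  have hκm : Measurable fun a => (κ a s).toReal := (κ.measurable_coe hs).ennreal_toReal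
  have hηm : Measurable fun a => (η a s).toReal := (η.measurable_coe hs).ennreal_toReal
  have hκi : Integrable (fun a => (κ a s).toReal) μ :=
    my_integrable_of_bounded μ hκm 1 fun a => by
      rw [abs_of_nonneg ENNReal.toReal_nonneg]; exact toReal_prob_le_one (κ a) s
  have hηi : Integrable (fun a => (η a s).toReal) μ :=
    my_integrable_of_bounded μ hηm 1 fun a => by
      rw [abs_of_nonneg ENNReal.toReal_nonneg]; exact toReal_prob_le_one (η a) s
  rw [← integral_sub hκi hηi]
  calc |∫ a, ((κ a s).toReal - (η a s).toReal) ∂μ|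
      ≤ ∫ a, |(κ a s).toReal - (η a s).toReal| ∂μ := by
        simpa [Real.norm_eq_abs] using
          norm_integral_le_integral_norm (fun a => (κ a s).toReal - (η a s).toReal) (μ := μ)
    _ ≤ ∫ a, tv (κ a) (η a) ∂μ := by
        refine integral_mono (hκi.sub hηi).abs ?_ fun a => abs_le_tv (κ a) (η a) hs
        refine my_integrable_of_bounded μ hmeas 1 fun a => ?_
        rw [abs_of_nonneg (tv_nonneg (κ a) (η a))]
        exact tv_le_one (κ a) (η a)

lemma tv_triangle (μ ξ ν : Measure α) [IsProbabilityMeasure μ] [IsProbabilityMeasure ξ]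
    [IsProbabilityMeasure ν] : tv μ ν ≤ tv μ ξ + tv ξ ν := by
  refine tv_le _ _ fun s hs => ?_
  calc |(μ s).toReal - (ν s).toReal|
      ≤ |(μ s).toReal - (ξ s).toReal| + |(ξ s).toReal - (ν s).toReal| := abs_sub_le _ _ _
    _ ≤ tv μ ξ + tv ξ ν := add_le_add (abs_le_tv μ ξ hs) (abs_le_tv ξ ν hs)

end Helpers

theorem two_step_tv_consistency_bound
    {X U Z : Type*} [MeasurableSpace X] [MeasurableSpace U] [MeasurableSpace Z]
    (P : Kernel (X × U) X) [IsMarkovKernel P]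
    (Enc : Kernel X Z) [IsMarkovKernel Enc]
    (F : Kernel (Z × U) Z) [IsMarkovKernel F]
    (x : X) (u₀ u₁ : U)
    (hmeas : Measurable fun x₁ =>
      tv ((P (x₁, u₁)).bind fun x₂ => Enc x₂) ((Enc x₁).bind fun z => F (z, u₁))) :
    tv ((P (x, u₀)).bind fun x₁ => (P (x₁, u₁)).bind fun x₂ => Enc x₂)
        (((Enc x).bind fun z₀ => F (z₀, u₀)).bind fun z₁ => F (z₁, u₁))
      ≤ tv ((P (x, u₀)).bind fun x₁ => Enc x₁) ((Enc x).bind fun z => F (z, u₀))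
        + ∫ x₁, tv ((P (x₁, u₁)).bind fun x₂ => Enc x₂)
            ((Enc x₁).bind fun z => F (z, u₁)) ∂(P (x, u₀)) := by
  have hm₁ : Measurable fun x₁ : X => (x₁, u₁) := measurable_id.prodMk measurable_const
  have hmF₀ : Measurable fun z : Z => (z, u₀) := measurable_id.prodMk measurable_const
  have hmF₁ : Measurable fun z : Z => (z, u₁) := measurable_id.prodMk measurable_const
  set P₁ : Kernel X X := P.comap _ hm₁ with hP₁
  set F₀ : Kernel Z Z := F.comap _ hmF₀ with hF₀
  set F₁ : Kernel Z Z := F.comap _ hmF₁ with hF₁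
  have key₂ : ∀ x₁ : X, (Enc ∘ₖ P₁) x₁ = (P (x₁, u₁)).bind fun x₂ => Enc x₂ := by
    intro x₁; simp [Kernel.comp_apply, hP₁, Kernel.comap_apply]
  have key₃ : ∀ x₁ : X, (F₁ ∘ₖ Enc) x₁ = (Enc x₁).bind fun z => F (z, u₁) := by
    intro x₁; simp [Kernel.comp_apply, hF₁, Kernel.comap_apply, Function.comp_def]
  have eμ : ((P (x, u₀)).bind fun x₁ => (P (x₁, u₁)).bind fun x₂ => Enc x₂)
      = (P (x, u₀)).bind ⇑(Enc ∘ₖ P₁) := by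
    rw [show (fun x₁ => (P (x₁, u₁)).bind fun x₂ => Enc x₂) = ⇑(Enc ∘ₖ P₁) from
      funext fun x₁ => (key₂ x₁).symm]
  have eF₀ : (fun z₀ => F (z₀, u₀)) = ⇑F₀ := by
    funext z; simp [hF₀, Kernel.comap_apply]
  have eF₁ : (fun z₁ => F (z₁, u₁)) = ⇑F₁ := by
    funext z; simp [hF₁, Kernel.comap_apply]
  have eν : ((Enc x).bind fun z₀ => F (z₀, u₀)) = (Enc x).bind ⇑F₀ := by rw [eF₀]
  have eν' : (((Enc x).bind fun z₀ => F (z₀, u₀)).bind fun z₁ => F (z₁, u₁))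
      = ((Enc x).bind ⇑F₀).bind ⇑F₁ := by
    rw [eν, eF₁]
  have eA : ((P (x, u₀)).bind fun x₁ => Enc x₁) = (P (x, u₀)).bind ⇑Enc := rfl
  haveI h1 : IsProbabilityMeasure ((P (x, u₀)).bind ⇑(Enc ∘ₖ P₁)) :=
    my_isProbabilityMeasure_bind _ _
  haveI h2 : IsProbabilityMeasure ((P (x, u₀)).bind ⇑(F₁ ∘ₖ Enc)) :=
    my_isProbabilityMeasure_bind _ _
  haveI h3 : IsProbabilityMeasure ((Enc x).bind ⇑F₀) := my_isProbabilityMeasure_bind _ _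
  haveI h4 : IsProbabilityMeasure (((Enc x).bind ⇑F₀).bind ⇑F₁) :=
    my_isProbabilityMeasure_bind _ _
  have htri := tv_triangle ((P (x, u₀)).bind ⇑(Enc ∘ₖ P₁))
    ((P (x, u₀)).bind ⇑(F₁ ∘ₖ Enc)) (((Enc x).bind ⇑F₀).bind ⇑F₁)
  have hfun : (fun x₁ => tv ((Enc ∘ₖ P₁) x₁) ((F₁ ∘ₖ Enc) x₁))
      = fun x₁ => tv ((P (x₁, u₁)).bind fun x₂ => Enc x₂) ((Enc x₁).bind fun z => F (z, u₁)) := by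
    funext x₁; rw [key₂ x₁, key₃ x₁]
  have hmeas' : Measurable fun x₁ => tv ((Enc ∘ₖ P₁) x₁) ((F₁ ∘ₖ Enc) x₁) := by
    rw [hfun]; exact hmeas
  have hstep2 : tv ((P (x, u₀)).bind ⇑(Enc ∘ₖ P₁)) ((P (x, u₀)).bind ⇑(F₁ ∘ₖ Enc))
      ≤ ∫ x₁, tv ((Enc ∘ₖ P₁) x₁) ((F₁ ∘ₖ Enc) x₁) ∂(P (x, u₀)) :=
    tv_bind_pair_le _ _ _ hmeas'
  have hint_eq : (∫ x₁, tv ((Enc ∘ₖ P₁) x₁) ((F₁ ∘ₖ Enc) x₁) ∂(P (x, u₀)))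
      = ∫ x₁, tv ((P (x₁, u₁)).bind fun x₂ => Enc x₂)
          ((Enc x₁).bind fun z => F (z, u₁)) ∂(P (x, u₀)) := by
    rw [hfun]
  have hassoc : (P (x, u₀)).bind ⇑(F₁ ∘ₖ Enc) = ((P (x, u₀)).bind ⇑Enc).bind ⇑F₁ := by
    rw [Measure.bind_bind Enc.measurable.aemeasurable F₁.measurable.aemeasurable,
      show (fun x₁ => (Enc x₁).bind ⇑F₁) = ⇑(F₁ ∘ₖ Enc) from
        funext fun x₁ => (Kernel.comp_apply F₁ Enc x₁).symm]
  have hstep1 : tv ((P (x, u₀)).bind ⇑(F₁ ∘ₖ Enc)) (((Enc x).bind ⇑F₀).bind ⇑F₁)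
      ≤ tv ((P (x, u₀)).bind ⇑Enc) ((Enc x).bind ⇑F₀) := by
    rw [hassoc]
    haveI : IsProbabilityMeasure ((P (x, u₀)).bind ⇑Enc) := my_isProbabilityMeasure_bind _ _
    exact tv_bind_le _ _ F₁
  rw [eμ, eν', eA, eν, ← hint_eq]
  linarith
end
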